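/- Let j ≥ 4 with j ≠ 6, and let e ≥ 1. The minimal period π of the sequence (F_i^e mod F_j) is: π = j if j is even and e is even; π = 2j if j is even and e is odd; π = j if j is odd and 4 divides e; π = 2j if j is odd and e ≡ 2 (mod 4); π = 4j if j is odd and e is odd. -/

import Mathlib

open Nat


lemma fib_step (j i : ℕ) :
    ((fib (i + j) : ZMod (fib j)) = (fib i) * (fib (j+1))) := by
  cases i with
  | zero => simp [ZMod.natCast_self]
  | succ k =>
    have : k + 1 + j = k + j + 1 := by ring
    rw [this, Nat.fib_add]
    push_cast [ZMod.natCast_self]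
    ring

lemma fib_mul_step (j : ℕ) : ∀ t i, ((fib (i + t*j) : ZMod (fib j)) = (fib i) * (fib (j+1))^t) := by
  intro t
  induction t with
  | zero => simp
  | succ s ih =>
    intro i
    have : i + (s+1)*j = (i + s*j) + j := by ring
    rw [this, fib_step, ih, pow_succ]
    ring

lemma cassini (n : ℕ) : (fib n : ℤ) * fib (n+2) = (fib (n+1):ℤ)^2 + (-1)^(n+1) := by
  induction n with
  | zero => simp
  | succ k ih =>
    have h2 : (fib (k+2) : ℤ) = fib k + fib (k+1) := by
      push_cast [Nat.fib_add_two]; ring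
    have h3 : (fib (k+3) : ℤ) = fib (k+1) + fib (k+2) := by
      push_cast [show k+3 = (k+1)+2 from rfl, Nat.fib_add_two]; ring
    rw [h3]
    rw [h2] at ih ⊢
    linear_combination (-1 : ℤ) * ih

-- c^2 = (-1)^j in ZMod (fib j)
lemma csq (j : ℕ) (hj : 1 ≤ j) : ((fib (j+1) : ZMod (fib j)))^2 = (-1)^j := by
  obtain ⟨n, rfl⟩ := Nat.exists_eq_add_of_le hj
  have h := cassini n
  -- fib n * fib (n+2) = fib(n+1)^2 + (-1)^(n+1) in ℤ; cast to ZMod (fib (1+n))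
  have h2 : ((fib n : ℤ) : ZMod (fib (1+n))) * ((fib (n+2) : ℤ) : ZMod (fib (1+n)))
      = ((fib (n+1):ℤ) : ZMod (fib (1+n)))^2 + (-1)^(n+1) := by
    rw [← Int.cast_mul, h]; push_cast; ring
  have hn1 : (1:ℕ) + n = n + 1 := by ring
  rw [hn1] at h2 ⊢
  -- fib (n+1) ≡ 0
  have hz : ((fib (n+1) : ℤ) : ZMod (fib (n+1))) = 0 := by
    push_cast [ZMod.natCast_self]; ring
  rw [hz] at h2
  -- fib (n+2) = fib n + fib (n+1) ≡ fib n
  have hf2 : ((fib (n+2) : ℤ) : ZMod (fib (n+1))) = ((fib n : ℤ) : ZMod (fib (n+1))) := by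
    push_cast [Nat.fib_add_two, ZMod.natCast_self]; ring
  rw [hf2] at h2
  have hgoal : ((fib (n+1+1) : ZMod (fib (n+1))))^2 = ((fib n : ℤ) : ZMod (fib (n+1)))^2 := by
    push_cast [Nat.fib_add_two, ZMod.natCast_self]; ring_nf
  rw [hgoal]
  linear_combination h2


lemma fib_pow_cube (k : ℕ) : ∀ t : ℕ,
    ((fib ((k+1)*(t+2)) : ZMod (fib (k+1) ^ 3)) =
      (t+2) * (fib (k+2) : ZMod (fib (k+1) ^ 3))^(t+1) * (fib (k+1) : ZMod (fib (k+1) ^ 3))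
        - ((t+2).choose 2) * (fib (k+2) : ZMod (fib (k+1) ^ 3))^t * (fib (k+1) : ZMod (fib (k+1) ^ 3))^2)
    ∧ ((fib ((k+1)*(t+2)+1) : ZMod (fib (k+1) ^ 3)) =
      (fib (k+2) : ZMod (fib (k+1) ^ 3))^(t+2)
        + ((t+2).choose 2) * (fib (k+2) : ZMod (fib (k+1) ^ 3))^t * (fib (k+1) : ZMod (fib (k+1) ^ 3))^2) := by
  set R := ZMod (fib (k+1) ^ 3) with hR
  set x : R := (fib (k+1) : R) with hx
  set A : R := (fib (k+2) : R) with hA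
  have hx3 : x^3 = 0 := by rw [hx, ← Nat.cast_pow]; exact ZMod.natCast_self _
  have hD : (fib k : R) = A - x := by
    rw [hA, hx]
    have : fib (k+2) = fib k + fib (k+1) := Nat.fib_add_two
    rw [this]; push_cast; ring
  have hrecu : ∀ s : ℕ, (fib ((k+1)*(s+1)) : R) = (fib ((k+1)*s) : R) * (fib k : R) + (fib ((k+1)*s+1) : R) * x := by
    intro s
    have h : (k+1)*(s+1) = (k+1)*s + k + 1 := by ring
    rw [h, Nat.fib_add, Nat.cast_add, Nat.cast_mul, Nat.cast_mul]
  have hrecv : ∀ s : ℕ, (fib ((k+1)*(s+1)+1) : R) = (fib ((k+1)*s) : R) * x + (fib ((k+1)*s+1) : R) * A := by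
    intro s
    have h : (k+1)*(s+1)+1 = (k+1)*s + (k+1) + 1 := by ring
    rw [h, Nat.fib_add, Nat.cast_add, Nat.cast_mul, Nat.cast_mul]
  have h1u : (fib ((k+1)*1) : R) = x := by rw [mul_one]
  have h1v : (fib ((k+1)*1+1) : R) = A := by rw [mul_one]
  intro t
  induction t with
  | zero =>
    have hu := hrecu 1
    have hv := hrecv 1
    rw [h1u, h1v] at hu hv
    rw [hD] at hu
    norm_num at hu hv ⊢
    constructor
    · rw [hu]; push_cast; ring
    · rw [hv]; push_cast; ring
  | succ m ih =>
    have hu := hrecu (m+2)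
    have hv := hrecv (m+2)
    rw [ih.1, ih.2] at hu hv
    rw [hD] at hu
    have hch : ((m+3).choose 2) = ((m+2).choose 2) + (m+2) := by
      rw [Nat.choose_succ_succ (m+2) 1, Nat.choose_one_right]; ring
    have hme : m + 1 + 2 = m + 2 + 1 := by ring
    constructor
    · rw [hme, hu, hch]; push_cast
      linear_combination (2*(((m+2).choose 2 : R))*A^m) * hx3
    · rw [hme, hv, hch]; push_cast
      linear_combination (-(((m+2).choose 2 : R))*A^m) * hx3


lemma fib_mod8_step (n : ℕ) : fib (n + 12) ≡ fib n [MOD 8] := by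
  have h : fib (n + 11 + 1) = fib n * fib 11 + fib (n+1) * fib 12 := Nat.fib_add n 11
  have h2 : n + 11 + 1 = n + 12 := by ring
  rw [h2] at h
  rw [h]
  have : fib 11 = 89 := by decide
  have h12 : fib 12 = 144 := by decide
  rw [this, h12]
  calc fib n * 89 + fib (n+1) * 144 ≡ fib n * 1 + fib (n+1) * 0 [MOD 8] :=
        Nat.ModEq.add ((Nat.ModEq.refl _).mul (by decide)) ((Nat.ModEq.refl _).mul (by decide))
    _ = fib n := by ring

lemma fib_mod8 (n : ℕ) : fib n ≡ fib (n % 12) [MOD 8] := by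
  conv_lhs => rw [show n = 12 * (n / 12) + n % 12 from (Nat.div_add_mod n 12).symm]
  generalize n % 12 = r
  induction (n / 12) with
  | zero => simp [Nat.ModEq.refl]
  | succ q ih =>
    have : 12 * (q+1) + r = (12 * q + r) + 12 := by ring
    rw [this]
    exact (fib_mod8_step _).trans ih

-- 8 does not divide fib (g-1) + fib (g+1) for g ≥ 1
lemma lucas_not_eight_dvd (g : ℕ) (hg : 1 ≤ g) : ¬ (8 ∣ fib (g-1) + fib (g+1)) := by
  obtain ⟨k, rfl⟩ : ∃ k, g = k + 1 := ⟨g-1, (Nat.succ_pred_eq_of_pos hg).symm⟩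
  intro hdvd
  have h1 : fib k ≡ fib (k % 12) [MOD 8] := fib_mod8 k
  have h2 : fib (k+2) ≡ fib (k % 12 + 2) [MOD 8] := by
    refine (fib_mod8 (k+2)).trans ?_
    have : (k + 2) % 12 = (k % 12 + 2) % 12 := by omega
    rw [this]
    exact (fib_mod8 (k % 12 + 2)).symm
  have hsum : fib k + fib (k+2) ≡ fib (k % 12) + fib (k % 12 + 2) [MOD 8] := h1.add h2
  have hz : fib (k+1-1) + fib (k+1+1) = fib k + fib (k+2) := by norm_num
  rw [hz] at hdvd
  have h0 : (fib k + fib (k+2)) % 8 = 0 := by omega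
  have hval : (fib (k % 12) + fib (k % 12 + 2)) % 8 = 0 := by
    have := hsum.symm
    unfold Nat.ModEq at this
    omega
  have hm : k % 12 < 12 := Nat.mod_lt _ (by norm_num)
  set m := k % 12 with hmdef
  clear_value m
  interval_cases m <;> exact absurd hval (by decide)


lemma fib_two_pow_le (n k : ℕ) : 2^k * fib n ≤ fib (n + 2*k) := by
  induction k with
  | zero => simp
  | succ s ih =>
    have h1 : n + 2*(s+1) = (n + 2*s) + 2 := by ring
    rw [h1, Nat.fib_add_two]
    have h2 : fib (n + 2*s) ≤ fib (n + 2*s + 1) := Nat.fib_le_fib_succ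
    calc 2^(s+1) * fib n = 2^s * fib n + 2^s * fib n := by ring
      _ ≤ fib (n + 2*s) + fib (n + 2*s + 1) := Nat.add_le_add ih (le_trans ih h2)

private example (g l : ℕ) (hg : 3 ≤ g) (hl : 3 ≤ l) : g + 2*l ≤ g * l := by nlinarith
private example (n : ℕ) : n < 2^n := Nat.lt_two_pow_self (n := n)





lemma lemmaK (j e m : ℕ) (hj : 4 ≤ j) (hj6 : j ≠ 6) (he : 1 ≤ e) (hm0 : 0 < m) (hmj : m < j) :
    ¬ (fib j ∣ fib m ^ e) := by
  intro hdvd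
  set g0 := Nat.gcd m j with hg0def
  have hg0j : g0 ∣ j := Nat.gcd_dvd_right m j
  have hrad0 : ∀ q : ℕ, q.Prime → q ∣ fib j → q ∣ fib g0 := by
    intro q hq hqj
    have h1 : q ∣ fib m := hq.dvd_of_dvd_pow (hqj.trans hdvd)
    rw [hg0def, Nat.fib_gcd]
    exact Nat.dvd_gcd h1 hqj
  have hg0pos : 0 < g0 := Nat.gcd_pos_of_pos_left _ hm0
  have hg0m : g0 ≤ m := Nat.le_of_dvd hm0 (Nat.gcd_dvd_left m j)
  -- k0 = j / g0 ≥ 2, pick prime ℓ ∣ k0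
  have hk0dvd : (j / g0) ∣ j := Nat.div_dvd_of_dvd hg0j
  have hk0ne1 : j / g0 ≠ 1 := by
    intro h1
    have : j = g0 := by
      have := Nat.div_mul_cancel hg0j
      rw [h1, one_mul] at this; omega
    omega
  have hk0ne0 : j / g0 ≠ 0 := by
    intro h0
    have := Nat.div_mul_cancel hg0j
    rw [h0, zero_mul] at this; omega
  obtain ⟨ℓ, hℓp, hℓk0⟩ := Nat.exists_prime_and_dvd hk0ne1
  have hℓj : ℓ ∣ j := hℓk0.trans hk0dvd
  obtain ⟨g, hgdef⟩ : ∃ g, g = j / ℓ := ⟨_, rfl⟩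
  have hgl : g * ℓ = j := by subst hgdef; exact Nat.div_mul_cancel hℓj
  have hg0g : g0 ∣ g := by
    obtain ⟨k1, hk1⟩ := hℓk0
    refine ⟨k1, ?_⟩
    have h1 : g0 * (j / g0) = j := Nat.mul_div_cancel' hg0j
    rw [hk1] at h1
    have hℓpos : 0 < ℓ := hℓp.pos
    have : g * ℓ = (g0 * k1) * ℓ := by rw [hgl]; rw [← h1]; ring
    exact Nat.eq_of_mul_eq_mul_right hℓpos this
  have hrad : ∀ q : ℕ, q.Prime → q ∣ fib j → q ∣ fib g := fun q hq hqj =>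
    (hrad0 q hq hqj).trans (Nat.fib_dvd _ _ hg0g)
  have hfib4 : (3:ℕ) ≤ fib j := by
    calc (3:ℕ) = fib 4 := by decide
      _ ≤ fib j := Nat.fib_mono hj
  have hfibjne1 : fib j ≠ 1 := by omega
  obtain ⟨q0, hq0p, hq0j⟩ := Nat.exists_prime_and_dvd hfibjne1
  have hgpos : 0 < g := by
    rcases Nat.eq_zero_or_pos g with h | h
    · rw [h, zero_mul] at hgl; omega
    · exact h
  have hfgpos : 0 < fib g := Nat.fib_pos.mpr hgpos
  have hFg : 2 ≤ fib g := by
    have h1 : q0 ∣ fib g := hrad q0 hq0p hq0j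
    rcases (show fib g = 1 ∨ 2 ≤ fib g by omega) with h | h
    · rw [h] at h1; exact absurd (Nat.eq_one_of_dvd_one h1) hq0p.ne_one
    · exact h
  have hg3 : 3 ≤ g := by
    have e1 : fib 1 = 1 := by decide
    have e2 : fib 2 = 1 := by decide
    rcases (show g = 1 ∨ g = 2 ∨ 3 ≤ g by omega) with h | h | h
    · rw [h, e1] at hFg; omega
    · rw [h, e2] at hFg; omega
    · exact h
  have hgj : g < j := by
    have : g * 2 ≤ g * ℓ := Nat.mul_le_mul_left _ hℓp.two_le
    omega
  have hfggj : fib g < fib j := by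
    have h1 : fib g < fib (g+1) := Nat.fib_lt_fib_succ (by omega)
    have h2 : fib (g+1) ≤ fib j := Nat.fib_mono (by omega)
    omega
  have hfgdvd : fib g ∣ fib j := Nat.fib_dvd _ _ ⟨ℓ, hgl.symm⟩
  obtain ⟨R, hfR⟩ : ∃ R, fib g * R = fib j := ⟨_, Nat.mul_div_cancel' hfgdvd⟩
  have hR2 : 2 ≤ R := by
    have h0 : R ≠ 0 := by intro h; rw [h, mul_zero] at hfR; omega
    have h1 : R ≠ 1 := by intro h; rw [h, mul_one] at hfR; omega
    omega
  have hRj : R ∣ fib j := ⟨fib g, by rw [← hfR]; ring⟩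
  -- set up for cube lemma
  obtain ⟨k, rfl⟩ : ∃ k, g = k + 1 := ⟨g-1, by omega⟩
  obtain ⟨t, rfl⟩ : ∃ t, ℓ = t + 2 := ⟨ℓ-2, by have := hℓp.two_le; omega⟩
  have hcube := (fib_pow_cube k t).1
  rw [hgl] at hcube
  have hfgZ : ((fib (k+1):ℤ)) ≠ 0 := by
    have : (0:ℕ) < fib (k+1) := hfgpos
    exact_mod_cast this.ne'
  have hfRZ : (fib j : ℤ) = (fib (k+1):ℤ) * (R:ℤ) := by exact_mod_cast congrArg (Nat.cast (R := ℤ)) hfR.symm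
  have hdvd3 : ((fib (k+1):ℤ))^3 ∣ ((fib j : ℤ) - (((t:ℤ)+2) * (fib (k+2):ℤ)^(t+1) * (fib (k+1):ℤ) - (((t+2).choose 2 : ℕ) : ℤ) * (fib (k+2):ℤ)^t * (fib (k+1):ℤ)^2)) := by
    have h0 : (((fib j : ℤ) - (((t:ℤ)+2) * (fib (k+2):ℤ)^(t+1) * (fib (k+1):ℤ) - (((t+2).choose 2 : ℕ) : ℤ) * (fib (k+2):ℤ)^t * (fib (k+1):ℤ)^2) : ℤ) : ZMod (fib (k+1)^3)) = 0 := by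
      push_cast
      push_cast at hcube
      linear_combination hcube
    rw [ZMod.intCast_zmod_eq_zero_iff_dvd] at h0
    push_cast at h0
    exact h0
  have hY : ((fib (k+1):ℤ))^2 ∣ ((R:ℤ) - ((t:ℤ)+2)*(fib (k+2):ℤ)^(t+1) + (((t+2).choose 2 : ℕ):ℤ)*(fib (k+2):ℤ)^t*(fib (k+1):ℤ)) := by
    rw [← mul_dvd_mul_iff_right hfgZ]
    have heq : ((R:ℤ) - ((t:ℤ)+2)*(fib (k+2):ℤ)^(t+1) + (((t+2).choose 2 : ℕ):ℤ)*(fib (k+2):ℤ)^t*(fib (k+1):ℤ)) * (fib (k+1):ℤ)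
        = ((fib j : ℤ) - (((t:ℤ)+2) * (fib (k+2):ℤ)^(t+1) * (fib (k+1):ℤ) - (((t+2).choose 2 : ℕ) : ℤ) * (fib (k+2):ℤ)^t * (fib (k+1):ℤ)^2)) := by
      rw [hfRZ]; ring
    rw [heq]
    have heq2 : ((fib (k+1):ℤ))^2 * (fib (k+1):ℤ) = ((fib (k+1):ℤ))^3 := by ring
    rw [heq2]
    exact hdvd3
  have hmodg : (fib (k+1):ℤ) ∣ ((R:ℤ) - ((t:ℤ)+2)*(fib (k+2):ℤ)^(t+1)) := by
    have h1 : (fib (k+1):ℤ) ∣ ((R:ℤ) - ((t:ℤ)+2)*(fib (k+2):ℤ)^(t+1) + (((t+2).choose 2 : ℕ):ℤ)*(fib (k+2):ℤ)^t*(fib (k+1):ℤ)) :=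
      (dvd_pow_self _ (two_ne_zero)).trans hY
    have h2 : (fib (k+1):ℤ) ∣ (((t+2).choose 2 : ℕ):ℤ)*(fib (k+2):ℤ)^t*(fib (k+1):ℤ) := Dvd.intro_left _ rfl
    have := dvd_sub h1 h2
    simpa using this
  have hcop : Nat.Coprime (fib (k+1)) (fib (k+2)) := Nat.fib_coprime_fib_succ (k+1)
  have hRprime : ∀ q : ℕ, q.Prime → q ∣ R → q = t+2 := by
    intro q hq hqR
    have hqg : q ∣ fib (k+1) := hrad q hq (hqR.trans hRj)
    have d1 : (q:ℤ) ∣ (R:ℤ) := Int.natCast_dvd_natCast.mpr hqR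
    have d2 : (q:ℤ) ∣ ((R:ℤ) - ((t:ℤ)+2)*(fib (k+2):ℤ)^(t+1)) := (Int.natCast_dvd_natCast.mpr hqg).trans hmodg
    have d3 : (q:ℤ) ∣ ((t:ℤ)+2)*(fib (k+2):ℤ)^(t+1) := by
      have := dvd_sub d1 d2
      simpa using this
    have hqint : Prime (q:ℤ) := Nat.prime_iff_prime_int.mp hq
    rcases hqint.dvd_mul.mp d3 with h | h
    · have : q ∣ t+2 := by exact_mod_cast h
      exact (Nat.prime_dvd_prime_iff_eq hq hℓp).mp this
    · exfalso
      have : (q:ℤ) ∣ (fib (k+2):ℤ) := hqint.dvd_of_dvd_pow h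
      have hq2 : q ∣ fib (k+2) := by exact_mod_cast this
      have : q ∣ 1 := by
        have := Nat.dvd_gcd hqg hq2
        rwa [hcop] at this
      exact hq.ne_one (Nat.eq_one_of_dvd_one this)
  have hlR : (t+2) ∣ R := by
    obtain ⟨q, hqp, hqR⟩ := Nat.exists_prime_and_dvd (by omega : R ≠ 1)
    rw [← hRprime q hqp hqR]; exact hqR
  have hlfg : (t+2) ∣ fib (k+1) := hrad _ hℓp (hlR.trans hRj)
  have hRpow : R = (t+2) ^ R.primeFactorsList.length :=
    Nat.eq_prime_pow_of_unique_prime_dvd (by omega) (fun {d} hd hdR => hRprime d hd hdR)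
  rcases Nat.eq_zero_or_pos t with rfl | htpos
  · -- ℓ = 2 case
    have hk3 : 3 ≤ k := by
      have : k + 1 ≠ 3 := by intro h; rw [h] at hgl; simp at hgl; omega
      omega
    have hLL : fib j = fib (k+1) * (fib k + fib (k+2)) := by
      have h1 : (k+1)*(0+2) = (k+1) + k + 1 := by ring
      rw [← hgl, h1, Nat.fib_add]
      ring
    have hRL : R = fib k + fib (k+2) := Nat.eq_of_mul_eq_mul_left hfgpos (hfR.trans hLL)
    have hL7 : 7 ≤ fib k + fib (k+2) := by
      have h1 : fib 3 ≤ fib k := Nat.fib_mono hk3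
      have h2 : fib 5 ≤ fib (k+2) := Nat.fib_mono (by omega)
      have e1 : fib 3 = 2 := by decide
      have e2 : fib 5 = 5 := by decide
      omega
    have hR7 : 7 ≤ R := by omega
    have hs3 : 3 ≤ R.primeFactorsList.length := by
      by_contra hs
      push_neg at hs
      have hb : R ≤ 4 := by
        rw [hRpow]
        calc (0+2)^R.primeFactorsList.length ≤ 2^2 := Nat.pow_le_pow_right (by norm_num) (by omega)
          _ = 4 := by norm_num
      omega
    have h8 : (8:ℕ) ∣ R := by
      calc (8:ℕ) = 2^3 := by norm_num
        _ ∣ 2^R.primeFactorsList.length := pow_dvd_pow 2 hs3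
        _ = (0+2)^R.primeFactorsList.length := by norm_num
        _ = R := hRpow.symm
    rw [hRL] at h8
    have := lucas_not_eight_dvd (k+1) (by omega)
    simp only [Nat.add_sub_cancel] at this
    exact this h8
  · -- ℓ odd case
    have hℓ3 : 3 ≤ t + 2 := by omega
    have hs1 : R.primeFactorsList.length = 1 := by
      by_contra hs
      have hs2 : 2 ≤ R.primeFactorsList.length := by
        rcases Nat.eq_zero_or_pos R.primeFactorsList.length with h0 | h1
        · rw [h0] at hRpow; simp at hRpow; omega
        · omega
      have hl2R : ((t:ℤ)+2)^2 ∣ (R:ℤ) := by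
        have : (t+2)^2 ∣ R := hRpow ▸ pow_dvd_pow _ hs2
        exact_mod_cast Int.natCast_dvd_natCast.mpr this
      have hlx : ((t:ℤ)+2) ∣ (fib (k+1):ℤ) := by exact_mod_cast Int.natCast_dvd_natCast.mpr hlfg
      have hl2Y : ((t:ℤ)+2)^2 ∣ ((R:ℤ) - ((t:ℤ)+2)*(fib (k+2):ℤ)^(t+1) + (((t+2).choose 2 : ℕ):ℤ)*(fib (k+2):ℤ)^t*(fib (k+1):ℤ)) :=
        (pow_dvd_pow_of_dvd hlx 2).trans hY
      have hlC : ((t:ℤ)+2) ∣ (((t+2).choose 2 : ℕ):ℤ) := by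
        have : (t+2) ∣ (t+2).choose 2 := hℓp.dvd_choose_self (by norm_num) (by omega)
        exact_mod_cast Int.natCast_dvd_natCast.mpr this
      have hl2C : ((t:ℤ)+2)^2 ∣ (((t+2).choose 2 : ℕ):ℤ)*(fib (k+2):ℤ)^t*(fib (k+1):ℤ) := by
        have h1 : ((t:ℤ)+2)*((t:ℤ)+2) ∣ ((((t+2).choose 2 : ℕ):ℤ)*(fib (k+2):ℤ)^t)*(fib (k+1):ℤ) :=
          mul_dvd_mul (hlC.mul_right _) hlx
        calc ((t:ℤ)+2)^2 = ((t:ℤ)+2)*((t:ℤ)+2) := by ring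
          _ ∣ _ := h1
      have hfin : ((t:ℤ)+2)^2 ∣ ((t:ℤ)+2)*(fib (k+2):ℤ)^(t+1) := by
        have h1 := dvd_sub (dvd_add hl2R hl2C) hl2Y
        have heq : ((R:ℤ) + (((t+2).choose 2 : ℕ):ℤ)*(fib (k+2):ℤ)^t*(fib (k+1):ℤ)) - ((R:ℤ) - ((t:ℤ)+2)*(fib (k+2):ℤ)^(t+1) + (((t+2).choose 2 : ℕ):ℤ)*(fib (k+2):ℤ)^t*(fib (k+1):ℤ)) = ((t:ℤ)+2)*(fib (k+2):ℤ)^(t+1) := by ring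
      
        rwa [heq] at h1
      have hlA : ((t:ℤ)+2) ∣ (fib (k+2):ℤ)^(t+1) := by
        have hne : ((t:ℤ)+2) ≠ 0 := by positivity
        have h2 : ((t:ℤ)+2)*((t:ℤ)+2) ∣ ((t:ℤ)+2)*(fib (k+2):ℤ)^(t+1) := by
          calc ((t:ℤ)+2)*((t:ℤ)+2) = ((t:ℤ)+2)^2 := by ring
            _ ∣ _ := hfin
        exact (mul_dvd_mul_iff_left hne).mp h2
      have hlint : Prime ((t:ℤ)+2) := by
        have := Nat.prime_iff_prime_int.mp hℓp
        have he : ((t+2:ℕ):ℤ) = (t:ℤ)+2 := by push_cast; ring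
        rwa [he] at this
      have : (t+2) ∣ fib (k+2) := by
        have := hlint.dvd_of_dvd_pow hlA
        exact_mod_cast this
      have hone : (t+2) ∣ 1 := by
        have hg := Nat.dvd_gcd hlfg this
        rwa [hcop] at hg
      exact hℓp.ne_one (Nat.eq_one_of_dvd_one hone)
    have hRl : R = t + 2 := by rw [hRpow, hs1, pow_one]
    -- size contradiction
    have hle : (k+1) + 2*(t+2) ≤ (k+1)*(t+2) := by nlinarith [hg3, hℓ3]
    have hlt : fib j < fib j := by
      calc fib j = fib (k+1) * (t+2) := by rw [← hfR, hRl]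
        _ < fib (k+1) * 2^(t+2) := by
            exact Nat.mul_lt_mul_of_pos_left Nat.lt_two_pow_self hfgpos
        _ = 2^(t+2) * fib (k+1) := mul_comm _ _
        _ ≤ fib ((k+1) + 2*(t+2)) := fib_two_pow_le _ _
        _ ≤ fib ((k+1)*(t+2)) := Nat.fib_mono hle
        _ = fib j := by rw [hgl]
    exact lt_irrefl _ hlt





theorem fib_pow_minimal_period (j e : ℕ) (hj : 4 ≤ j) (hj6 : j ≠ 6) (he : 1 ≤ e) :
    IsLeast {p : ℕ | 0 < p ∧ ∀ i : ℕ, Nat.fib (i + p) ^ e ≡ Nat.fib i ^ e [MOD Nat.fib j]}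
      (if Even j then (if Even e then j else 2 * j)
       else (if 4 ∣ e then j else if e % 4 = 2 then 2 * j else 4 * j)) := by
  have hfib4 : (3:ℕ) ≤ fib j := by
    calc (3:ℕ) = fib 4 := by decide
      _ ≤ fib j := Nat.fib_mono hj
  set N := fib j with hN
  set c : ZMod N := (fib (j+1) : ZMod N) with hc
  have hcsq : c^2 = (-1:ZMod N)^j := csq j (by omega)
  -- membership criterion
  have hmem : ∀ m : ℕ, 0 < m → c^(m*e) = 1 →
      (∀ i : ℕ, fib (i + m*j) ^ e ≡ fib i ^ e [MOD fib j]) := by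
    intro m hm hcm i
    rw [← ZMod.natCast_eq_natCast_iff]
    push_cast
    rw [fib_mul_step j m i]
    rw [mul_pow, ← pow_mul, hcm, mul_one]
  -- j | p for any period p
  have hjdvd : ∀ p : ℕ, 0 < p → (∀ i : ℕ, fib (i + p) ^ e ≡ fib i ^ e [MOD fib j]) → j ∣ p := by
    intro p hp hper
    by_contra hnd
    have hr0 : p % j ≠ 0 := fun h => hnd (Nat.dvd_of_mod_eq_zero h)
    have hrlt : p % j < j := Nat.mod_lt _ (by omega)
    set i := j - p % j with hi
    have hip : i + p = j * (p / j + 1) := by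
      have h1 := Nat.div_add_mod p j
      have h2 : j * (p/j+1) = j*(p/j) + j := by ring
      omega
    have h1 : fib j ∣ fib (i + p) ^ e := by
      refine dvd_pow ?_ (by omega)
      rw [hip]
      exact Nat.fib_dvd _ _ ⟨p / j + 1, rfl⟩
    have h2 : fib (i+p) ^ e ≡ 0 [MOD fib j] := (Nat.modEq_zero_iff_dvd).mpr h1
    have h3 : fib i ^ e ≡ 0 [MOD fib j] := ((hper i).symm.trans h2)
    have h4 : fib j ∣ fib i ^ e := (Nat.modEq_zero_iff_dvd).mp h3
    exact lemmaK j e i hj hj6 he (by omega) (by omega) h4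
  -- period gives c^(t*e) = 1
  have hct : ∀ t : ℕ, (∀ i : ℕ, fib (i + j*t) ^ e ≡ fib i ^ e [MOD fib j]) → c^(t*e) = 1 := by
    intro t hper
    have h := hper 1
    rw [← ZMod.natCast_eq_natCast_iff] at h
    push_cast at h
    rw [show j*t = t*j from mul_comm j t, fib_mul_step j t 1] at h
    simpa [pow_mul] using h
  -- c ≠ 1
  have hj1 : 1 ≤ j - 1 := by omega
  have hfj1 : fib (j+1) % fib j = fib (j-1) := by
    have h1 : fib (j+1) = fib (j-1) + fib j := by
      have : j + 1 = (j-1) + 2 := by omega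
      rw [this, Nat.fib_add_two]
      have : j - 1 + 1 = j := by omega
      rw [this]
    have h2 : fib (j-1) < fib j := by
      have := Nat.fib_lt_fib_succ (n := j-1) (by omega)
      have hh : j - 1 + 1 = j := by omega
      rwa [hh] at this
    rw [h1, Nat.add_mod_right, Nat.mod_eq_of_lt h2]
  have hfjm1 : 2 ≤ fib (j-1) := by
    calc (2:ℕ) = fib 3 := by decide
      _ ≤ fib (j-1) := Nat.fib_mono (by omega)
  have hcne1 : c ≠ 1 := by
    intro heq
    rw [hc, show (1 : ZMod N) = ((1:ℕ) : ZMod N) by push_cast; rfl, ZMod.natCast_eq_natCast_iff'] at heq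
    rw [hN, hfj1, Nat.mod_eq_of_lt (by omega)] at heq
    omega
  rcases Nat.even_or_odd j with hje | hjo
  · -- j even
    have hc2 : c^2 = 1 := by rw [hcsq, hje.neg_one_pow]
    rw [if_pos hje]
    rcases Nat.even_or_odd e with hee | heo
    · rw [if_pos hee]
      constructor
      · refine ⟨by omega, ?_⟩
        intro i
        have := hmem 1 (by omega) ?_ i
        · simpa [one_mul] using this
        · obtain ⟨u, hu⟩ := hee
          rw [one_mul, show e = 2*u by omega, pow_mul, hc2, one_pow]
      · rintro p ⟨hp, hper⟩
        have := hjdvd p hp hper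
        exact Nat.le_of_dvd hp this
    · rw [if_neg (Nat.not_even_iff_odd.mpr heo)]
      constructor
      · refine ⟨by omega, ?_⟩
        intro i
        have := hmem 2 (by omega) ?_ i
        · have h22 : 2 * j = 2 * j := rfl
          simpa using this
        · rw [pow_mul, hc2, one_pow]
      · rintro p ⟨hp, hper⟩
        obtain ⟨t, rfl⟩ := hjdvd p hp hper
        have ht1 : 1 ≤ t := Nat.pos_of_ne_zero (by rintro rfl; simp at hp)
        have hce := hct t hper
        have ht2 : 2 ≤ t := by
          by_contra hlt
          have ht1' : t = 1 := by omega
          rw [ht1', one_mul] at hce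
          obtain ⟨u, hu⟩ := heo
          rw [hu, pow_add, pow_mul, hc2, one_pow, one_mul, pow_one] at hce
          exact hcne1 hce
        calc 2*j = j*2 := mul_comm _ _
          _ ≤ j*t := Nat.mul_le_mul_left _ ht2
  · -- j odd
    rw [if_neg (Nat.not_even_iff_odd.mpr hjo)]
    have hc2 : c^2 = -1 := by rw [hcsq, hjo.neg_one_pow]
    have hj5 : 5 ≤ j := by rcases hjo with ⟨u,hu⟩; omega
    have hfj5 : 5 ≤ fib j := by
      calc (5:ℕ) = fib 5 := by decide
        _ ≤ fib j := Nat.fib_mono hj5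
    haveI : Fact (2 < N) := ⟨by omega⟩
    have hneg : (-1 : ZMod N) ≠ 1 := ZMod.neg_one_ne_one
    have hc4 : c^4 = 1 := by
      have h : c^4 = (c^2)^2 := by ring
      rw [h, hc2]; ring
    have h4dvd : ∀ n, c^n = 1 → 4 ∣ n := by
      intro n hn
      have hd : n = 4*(n/4) + n%4 := (Nat.div_add_mod n 4).symm
      rw [hd, pow_add, pow_mul, hc4, one_pow, one_mul] at hn
      have hr : n % 4 = 0 ∨ n % 4 = 1 ∨ n % 4 = 2 ∨ n % 4 = 3 := by omega
      rcases hr with h | h | h | h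
      · exact Nat.dvd_of_mod_eq_zero h
      · rw [h, pow_one] at hn
        exact absurd (by rw [← hc2, hn]; ring : (-1 : ZMod N) = 1) hneg
      · rw [h] at hn
        exact absurd (hc2 ▸ hn : (-1 : ZMod N) = 1) hneg
      · rw [h] at hn
        have hcc : c = 1 := by
          calc c = c * c^3 := by rw [hn, mul_one]
            _ = c^4 := by ring
            _ = 1 := hc4
        exact absurd (by rw [← hc2, hcc]; norm_num : (-1 : ZMod N) = 1) hneg
    by_cases h4e : 4 ∣ e
    · rw [if_pos h4e]
      constructor
      · refine ⟨by omega, ?_⟩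
        intro i
        have := hmem 1 (by omega) ?_ i
        · simpa [one_mul] using this
        · obtain ⟨u, hu⟩ := h4e
          rw [one_mul, hu, pow_mul, hc4, one_pow]
      · rintro p ⟨hp, hper⟩
        have := hjdvd p hp hper
        exact Nat.le_of_dvd hp this
    · rw [if_neg h4e]
      have he40 : e % 4 ≠ 0 := fun h => h4e (Nat.dvd_of_mod_eq_zero h)
      by_cases he42 : e % 4 = 2
      · rw [if_pos he42]
        constructor
        · refine ⟨by omega, ?_⟩
          intro i
          have := hmem 2 (by omega) ?_ i
          · simpa using this
          · rw [show 2*e = 4*(2*(e/4)+1) by omega, pow_mul, hc4, one_pow]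
        · rintro p ⟨hp, hper⟩
          obtain ⟨t, rfl⟩ := hjdvd p hp hper
          have ht1 : 1 ≤ t := Nat.pos_of_ne_zero (by rintro rfl; simp at hp)
          have hce := hct t hper
          have ht2 : 2 ≤ t := by
            by_contra hlt
            have ht1' : t = 1 := by omega
            rw [ht1', one_mul] at hce
            have := h4dvd e hce
            omega
          calc 2*j = j*2 := mul_comm _ _
            _ ≤ j*t := Nat.mul_le_mul_left _ ht2
      · rw [if_neg he42]
        have he4 : e % 4 = 1 ∨ e % 4 = 3 := by omega
        constructor
        · refine ⟨by omega, ?_⟩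
          intro i
          have := hmem 4 (by omega) ?_ i
          · simpa using this
          · rw [pow_mul, hc4, one_pow]
        · rintro p ⟨hp, hper⟩
          obtain ⟨t, rfl⟩ := hjdvd p hp hper
          have ht1 : 1 ≤ t := Nat.pos_of_ne_zero (by rintro rfl; simp at hp)
          have hce := hct t hper
          have h4te : 4 ∣ t * e := h4dvd _ hce
          have hcop2 : Nat.Coprime 2 e := (Nat.Prime.coprime_iff_not_dvd Nat.prime_two).mpr (by omega)
          have hcop4 : Nat.Coprime 4 e := by
            have := hcop2.pow_left 2
            norm_num at this
            exact this
          have h4t : 4 ∣ t := hcop4.dvd_of_dvd_mul_right h4te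
          have ht4 : 4 ≤ t := Nat.le_of_dvd (by omega) h4t
          calc 4*j = j*4 := mul_comm _ _
            _ ≤ j*t := Nat.mul_le_mul_left _ ht4
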